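/- For real x ≠ 0 and all n ≥ 1, the Cassini identity O_{n+1}(x)·O_{n−1}(x) − O_n(x)² = −1/x^{2n} holds for the Oresme polynomials. -/

import Mathlib

noncomputable def oresme : ℕ → ℝ → ℝ
  | 0 => fun _ => 0
  | 1 => fun x => 1/x
  | (n+2) => fun x => oresme (n+1) x - (1/x^2) * oresme n x

theorem oresme_cassini (x : ℝ) (hx : x ≠ 0) (n : ℕ) (hn : 1 ≤ n) :
    oresme (n+1) x * oresme (n-1) x - (oresme n x)^2 = -(1 / x^(2*n)) := by
  obtain ⟨m, rfl⟩ := Nat.exists_eq_add_of_le hn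
  induction m with
  | zero =>
    simp [oresme]
  | succ k ih =>
    have ih' := ih (by omega)
    have h2 : 1 + (k+1) - 1 = k + 1 := by omega
    have h1 : 1 + k - 1 = k := by omega
    rw [h1] at ih'
    rw [h2]
    have e1 : 1 + (k + 1) + 1 = (k+1) + 2 := by ring
    have e2 : 1 + (k + 1) = k + 2 := by ring
    have e3 : 1 + k + 1 = k + 2 := by ring
    rw [e1, e2]
    rw [e3, Nat.add_comm 1 k] at ih'
    show (oresme (k+2) x - (1/x^2) * oresme (k+1) x) * oresme (k+1) x
        - (oresme (k+2) x)^2 = _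
    have hk2 : oresme (k+2) x = oresme (k+1) x - (1/x^2) * oresme k x := rfl
    have hx2 : x^2 ≠ 0 := pow_ne_zero _ hx
    have key : (oresme (k+2) x - (1/x^2) * oresme (k+1) x) * oresme (k+1) x
        - (oresme (k+2) x)^2
        = (1/x^2) * (oresme (k+2) x * oresme k x - (oresme (k+1) x)^2) := by
      rw [hk2]; ring
    rw [key, ih']
    rw [show 2 * (k + 2) = 2 * (k + 1) + 2 by ring, pow_add]
    field_simp
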